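/- Let I be a nonzero proper squarefree monomial ideal in R = k[x_1,...,x_n] over a field k. Then ρ̂(I^(•), overline(I^•)) = sup{λ > 0 : λ·SP(I) ⊄ NP(I)}. -/

import Mathlib

open Filter Pointwise MvPolynomial

noncomputable section

/-- A graded family of ideals: `a p * a q ⊆ a (p+q)` for all `p, q ≥ 1`. -/
def IsGradedFamily {R : Type*} [CommSemiring R] (a : ℕ → Ideal R) : Prop :=
  ∀ p q : ℕ, 1 ≤ p → 1 ≤ q → a p * a q ≤ a (p + q)

/-- The integral closure of an ideal `J`: elements `x` satisfying an equation
`x^m + c_1 x^{m-1} + ⋯ + c_m = 0` with `c_i ∈ J^i`. -/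
def idealIntegralClosure {R : Type*} [CommRing R] (J : Ideal R) : Set R :=
  {x | ∃ m : ℕ, 0 < m ∧ ∃ c : ℕ → R,
    (∀ i ∈ Finset.Icc 1 m, c i ∈ J ^ i) ∧
    x ^ m + ∑ i ∈ Finset.Icc 1 m, c i * x ^ (m - i) = 0}

/-- The asymptotic resurgence
`ρ̂(a_•, B_•) = sup{s/r : s,r ≥ 1, a_{st} ⊄ B_{rt} for all t ≫ 0}` (in `EReal`, so that
the supremum of the empty set is `⊥ = -∞`); the second family is a family of subsets. -/
def asymptoticResurgence {R : Type*} [CommSemiring R] (a : ℕ → Ideal R) (B : ℕ → Set R) :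
    EReal :=
  sSup {x : EReal | ∃ s r : ℕ, 1 ≤ s ∧ 1 ≤ r ∧
    (∀ᶠ t in atTop, ¬ ((a (s * t) : Set R) ⊆ B (r * t))) ∧
    x = (((s : ℝ) / (r : ℝ) : ℝ) : EReal)}

/-- Usual dot product on `ℝⁿ`. -/
def dotProd {n : ℕ} (a b : Fin n → ℝ) : ℝ := ∑ i, a i * b i

/-- The polar set `D° = {a : ⟨a,b⟩ ≥ 1 for all b ∈ D}`. -/
def polarSet {n : ℕ} (D : Set (Fin n → ℝ)) : Set (Fin n → ℝ) :=
  {a | ∀ b ∈ D, 1 ≤ dotProd a b}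

/-- `sup{λ > 0 : λ·A ⊄ B}` as an extended real (`sup ∅ = -∞`). -/
def supScaleNotSubset {n : ℕ} (A B : Set (Fin n → ℝ)) : EReal :=
  sSup {x : EReal | ∃ l : ℝ, 0 < l ∧ ¬ (l • A ⊆ B) ∧ x = ((l : ℝ) : EReal)}

variable {𝕜 : Type*} [Field 𝕜] {n : ℕ}

/-- A monomial ideal: an ideal generated by monomials. -/
def IsMonomialIdeal (I : Ideal (MvPolynomial (Fin n) 𝕜)) : Prop :=
  ∃ S : Set (Fin n →₀ ℕ), I = Ideal.span ((fun d => monomial d (1 : 𝕜)) '' S)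

/-- The Newton polyhedron `NP(I) = conv{d ∈ ℤⁿ_{≥0} : x^d ∈ I}`. -/
def newtonPolyhedron (I : Ideal (MvPolynomial (Fin n) 𝕜)) : Set (Fin n → ℝ) :=
  convexHull ℝ {x | ∃ d : Fin n →₀ ℕ, monomial d (1 : 𝕜) ∈ I ∧ x = fun i => (d i : ℝ)}

/-- The Newton–Okounkov body `Δ(a_•) = closure (⋃_{k ≥ 1} (1/k)·NP(a_k))`. -/
def noBody (a : ℕ → Ideal (MvPolynomial (Fin n) 𝕜)) : Set (Fin n → ℝ) :=
  closure (⋃ k : ℕ, ⋃ (_ : 1 ≤ k), (k : ℝ)⁻¹ • newtonPolyhedron (a k))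

/-- A squarefree monomial ideal: an ideal generated by squarefree monomials. -/
def IsSqfreeMonomialIdeal (I : Ideal (MvPolynomial (Fin n) 𝕜)) : Prop :=
  ∃ S : Set (Finset (Fin n)), I = Ideal.span ((fun s => ∏ i ∈ s, X i) '' S)

open Classical in
/-- The symbolic polyhedron
`SP(I) = ⋂_{p ∈ Ass(R/I)} {a ∈ ℝⁿ_{≥0} : Σ_{x_i ∈ p} a_i ≥ 1}`. -/
def symbolicPolyhedron (I : Ideal (MvPolynomial (Fin n) 𝕜)) : Set (Fin n → ℝ) :=
  ⋂ p ∈ associatedPrimes (MvPolynomial (Fin n) 𝕜) (MvPolynomial (Fin n) 𝕜 ⧸ I),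
    {a | (∀ i, 0 ≤ a i) ∧ 1 ≤ ∑ i : Fin n, if X i ∈ p then a i else 0}

open Classical in
/-- The Alexander dual `I^∨ = (∏_{x_i ∈ p} x_i : p ∈ Ass(R/I))`. -/
def alexanderDual (I : Ideal (MvPolynomial (Fin n) 𝕜)) : Ideal (MvPolynomial (Fin n) 𝕜) :=
  Ideal.span {f | ∃ p ∈ associatedPrimes (MvPolynomial (Fin n) 𝕜) (MvPolynomial (Fin n) 𝕜 ⧸ I),
    f = ∏ i ∈ Finset.univ.filter (fun i => X i ∈ p), X i}

/-- The `m`-th symbolic power `I^{(m)} = ⋂_{p ∈ Ass(R/I)} p^m`. -/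
def symbolicPower (I : Ideal (MvPolynomial (Fin n) 𝕜)) (m : ℕ) : Ideal (MvPolynomial (Fin n) 𝕜) :=
  ⨅ p ∈ associatedPrimes (MvPolynomial (Fin n) 𝕜) (MvPolynomial (Fin n) 𝕜 ⧸ I), p ^ m

/-! ### Auxiliary infrastructure for the proof -/

namespace SqfAux

/-- Products of coefficient-one monomials. -/
lemma prod_monomial_one {ι : Type*} (t : Finset ι) (e : ι → (Fin n →₀ ℕ)) :
    (∏ j ∈ t, (monomial (e j) (1 : 𝕜))) = monomial (∑ j ∈ t, e j) (1 : 𝕜) := by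
  classical
  induction t using Finset.cons_induction with
  | empty => simp
  | cons a s ha ih =>
      rw [Finset.prod_cons, Finset.sum_cons, ih, monomial_mul, one_mul]

/-- The set of `k`-fold sums of elements of `E`. -/
def sumSet (E : Set (Fin n →₀ ℕ)) (k : ℕ) : Set (Fin n →₀ ℕ) :=
  {d | ∃ g : Fin k → (Fin n →₀ ℕ), (∀ j, g j ∈ E) ∧ d = ∑ j, g j}

lemma span_mono_pow (E : Set (Fin n →₀ ℕ)) (k : ℕ) :
    (Ideal.span ((fun d => monomial d (1 : 𝕜)) '' E)) ^ k
      = Ideal.span ((fun d => monomial d (1 : 𝕜)) '' sumSet E k) := by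
  induction k with
  | zero =>
      have h0 : sumSet E 0 = {0} := by
        ext d
        constructor
        · rintro ⟨g, _, rfl⟩; simp
        · rintro rfl; exact ⟨fun j => j.elim0, fun j => j.elim0, by simp⟩
      rw [pow_zero, h0]
      have h1 : ((fun d => monomial d (1 : 𝕜)) '' ({0} : Set (Fin n →₀ ℕ)))
          = ({1} : Set (MvPolynomial (Fin n) 𝕜)) := by
        simp
      rw [h1, Ideal.one_eq_top, Ideal.span_singleton_one]
  | succ k ih =>
      rw [pow_succ, ih, Ideal.span_mul_span]
      apply le_antisymm
      · rw [Ideal.span_le]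
        rintro x hx
        rw [Set.mem_mul] at hx
        obtain ⟨a, ⟨d, ⟨g, hg, rfl⟩, rfl⟩, b, ⟨e, he, rfl⟩, hx⟩ := hx
        subst hx
        rw [monomial_mul, one_mul]
        refine Ideal.subset_span ⟨(∑ j, g j) + e, ⟨Fin.snoc g e, fun j => ?_, ?_⟩, rfl⟩
        · induction j using Fin.lastCases with
          | last => simpa using he
          | cast i => simpa using hg i
        · rw [Fin.sum_univ_castSucc]
          simp
      · rw [Ideal.span_le]
        rintro x ⟨d, ⟨g, hg, rfl⟩, rfl⟩
        apply Ideal.subset_span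
        rw [Set.mem_mul]
        refine ⟨monomial (∑ j : Fin k, g j.castSucc) 1,
          ⟨∑ j : Fin k, g j.castSucc, ⟨fun j => g j.castSucc, fun j => hg _, rfl⟩, rfl⟩,
          monomial (g (Fin.last k)) 1, ⟨g (Fin.last k), hg _, rfl⟩, ?_⟩
        rw [monomial_mul, one_mul, Fin.sum_univ_castSucc]

lemma monomial_mem_span_mono_iff (E : Set (Fin n →₀ ℕ)) (b : Fin n →₀ ℕ) :
    (monomial b (1 : 𝕜)) ∈ Ideal.span ((fun d => monomial d (1 : 𝕜)) '' E)
      ↔ ∃ e ∈ E, e ≤ b := by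
  rw [mem_ideal_span_monomial_image]
  simp [support_monomial]

lemma mem_span_mono_iff_monomial (E : Set (Fin n →₀ ℕ)) (f : MvPolynomial (Fin n) 𝕜) :
    f ∈ Ideal.span ((fun d => monomial d (1 : 𝕜)) '' E)
      ↔ ∀ b ∈ f.support, (monomial b (1 : 𝕜)) ∈ Ideal.span ((fun d => monomial d (1 : 𝕜)) '' E) := by
  rw [mem_ideal_span_monomial_image]
  refine forall₂_congr fun b _ => ?_
  rw [monomial_mem_span_mono_iff]

lemma monomial_mem_pow_span_mono_iff (E : Set (Fin n →₀ ℕ)) (k : ℕ) (b : Fin n →₀ ℕ) :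
    (monomial b (1 : 𝕜)) ∈ (Ideal.span ((fun d => monomial d (1 : 𝕜)) '' E)) ^ k
      ↔ ∃ g : Fin k → (Fin n →₀ ℕ), (∀ j, g j ∈ E) ∧ (∑ j, g j) ≤ b := by
  rw [span_mono_pow, monomial_mem_span_mono_iff]
  constructor
  · rintro ⟨d, ⟨g, hg, rfl⟩, hle⟩; exact ⟨g, hg, hle⟩
  · rintro ⟨g, hg, hle⟩; exact ⟨∑ j, g j, ⟨g, hg, rfl⟩, hle⟩

lemma prod_mem_pow_sum {R : Type*} [CommRing R] {I : Ideal R} {ι : Type*} (t : Finset ι)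
    (m : ι → ℕ) (x : ι → R) (h : ∀ j ∈ t, x j ∈ I ^ (m j)) :
    (∏ j ∈ t, x j) ∈ I ^ (∑ j ∈ t, m j) := by
  classical
  induction t using Finset.cons_induction with
  | empty => simp [Ideal.one_eq_top]
  | cons a s ha ih =>
      rw [Finset.prod_cons, Finset.sum_cons, pow_add]
      exact Ideal.mul_mem_mul (h a (Finset.mem_cons_self a s))
        (ih fun j hj => h j (Finset.mem_cons_of_mem hj))

lemma monomial_mem_pow_of_le {I : Ideal (MvPolynomial (Fin n) 𝕜)} {M : ℕ} {c e : Fin n →₀ ℕ}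
    (hle : e ≤ c) (h : monomial e (1 : 𝕜) ∈ I ^ M) : monomial c (1 : 𝕜) ∈ I ^ M := by
  have : monomial c (1 : 𝕜) = monomial (c - e) (1 : 𝕜) * monomial e (1 : 𝕜) := by
    rw [monomial_mul, one_mul, tsub_add_cancel_of_le hle]
  rw [this]
  exact Ideal.mul_mem_left _ _ h

/-- The monomial prime generated by the variables `X i`, `i ∈ F`. -/
def PF (F : Finset (Fin n)) : Ideal (MvPolynomial (Fin n) 𝕜) :=
  Ideal.span ((fun d => monomial d (1 : 𝕜)) '' ((fun i => Finsupp.single i 1) '' ↑F))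

lemma mem_PF_iff (F : Finset (Fin n)) (f : MvPolynomial (Fin n) 𝕜) :
    f ∈ PF (𝕜 := 𝕜) F ↔ ∀ b ∈ f.support, ∃ i ∈ F, 1 ≤ b i := by
  rw [PF, mem_ideal_span_monomial_image]
  refine forall₂_congr fun b _ => ?_
  constructor
  · rintro ⟨si, ⟨i, hi, rfl⟩, hle⟩
    exact ⟨i, hi, Finsupp.single_le_iff.mp hle⟩
  · rintro ⟨i, hi, hb⟩
    exact ⟨Finsupp.single i 1, ⟨i, hi, rfl⟩, Finsupp.single_le_iff.mpr hb⟩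

lemma X_mem_PF_iff (F : Finset (Fin n)) (i : Fin n) :
    (X i : MvPolynomial (Fin n) 𝕜) ∈ PF (𝕜 := 𝕜) F ↔ i ∈ F := by
  rw [mem_PF_iff]
  constructor
  · intro h
    obtain ⟨j, hj, hle⟩ := h (Finsupp.single i 1) (by
      rw [support_X]; exact Finset.mem_singleton_self _)
    have hij : i = j := by
      by_contra hne
      rw [Finsupp.single_apply, if_neg hne] at hle
      omega
    exact hij ▸ hj
  · intro hi b hb
    rw [support_X, Finset.mem_singleton] at hb
    subst hb
    exact ⟨i, hi, by simp⟩

lemma monomial_mem_PF_pow_iff (F : Finset (Fin n)) (m : ℕ) (a : Fin n →₀ ℕ) :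
    (monomial a (1 : 𝕜)) ∈ (PF (𝕜 := 𝕜) F) ^ m ↔ m ≤ ∑ i ∈ F, a i := by
  classical
  rw [PF, monomial_mem_pow_span_mono_iff]
  constructor
  · rintro ⟨g, hg, hle⟩
    have hch : ∀ j, ∃ i, i ∈ F ∧ g j = Finsupp.single i 1 := by
      intro j
      obtain ⟨i, hi, h⟩ := hg j
      exact ⟨i, hi, h.symm⟩
    choose ι hιF hι using hch
    have h1 : ∀ j : Fin m, ∑ i ∈ F, (g j) i = 1 := by
      intro j
      rw [hι j]
      simp only [Finsupp.single_apply]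
      rw [Finset.sum_ite_eq F (ι j) (fun _ => 1), if_pos (hιF j)]
    calc m = ∑ j : Fin m, ∑ i ∈ F, (g j) i := by simp [h1]
      _ = ∑ i ∈ F, ∑ j : Fin m, (g j) i := Finset.sum_comm
      _ ≤ ∑ i ∈ F, a i := by
          refine Finset.sum_le_sum fun i _ => ?_
          calc ∑ j : Fin m, (g j) i = (∑ j : Fin m, g j) i := (Finset.sum_apply' i).symm
            _ ≤ a i := hle i
  · intro hm
    induction m generalizing a with
    | zero => exact ⟨fun j => j.elim0, fun j => j.elim0, by simp⟩
    | succ m ih =>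
        have hex : ∃ i₀ ∈ F, 0 < a i₀ := by
          by_contra hcon
          push_neg at hcon
          have : ∑ i ∈ F, a i = 0 := Finset.sum_eq_zero fun i hi => by
            have := hcon i hi; omega
          omega
        obtain ⟨i₀, hi₀F, hi₀⟩ := hex
        have hsub : Finsupp.single i₀ 1 ≤ a := Finsupp.single_le_iff.mpr hi₀
        set a' := a - Finsupp.single i₀ 1 with ha'
        have hsum : ∑ i ∈ F, a' i + 1 = ∑ i ∈ F, a i := by
          have e1 : ∑ i ∈ F.erase i₀, a' i + a' i₀ = ∑ i ∈ F, a' i :=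
            Finset.sum_erase_add F _ hi₀F
          have e2 : ∑ i ∈ F.erase i₀, a i + a i₀ = ∑ i ∈ F, a i :=
            Finset.sum_erase_add F _ hi₀F
          have h1 : a' i₀ + 1 = a i₀ := by
            simp only [ha', Finsupp.tsub_apply, Finsupp.single_eq_same]
            omega
          have h3 : ∑ i ∈ F.erase i₀, a' i = ∑ i ∈ F.erase i₀, a i := by
            refine Finset.sum_congr rfl fun i hi => ?_
            have hne : i ≠ i₀ := Finset.ne_of_mem_erase hi
            simp [ha', Finsupp.tsub_apply, Finsupp.single_apply, Ne.symm hne]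
          omega
        obtain ⟨g', hg', hle'⟩ := ih (a := a') (by omega)
        refine ⟨Fin.cons (Finsupp.single i₀ 1) g', fun j => ?_, ?_⟩
        · induction j using Fin.cases with
          | zero => exact ⟨i₀, hi₀F, by simp⟩
          | succ jj => simpa using hg' jj
        · rw [Fin.sum_univ_succ]
          simp only [Fin.cons_zero, Fin.cons_succ]
          calc Finsupp.single i₀ 1 + ∑ j : Fin m, g' j ≤ Finsupp.single i₀ 1 + a' :=
                add_le_add le_rfl hle'
            _ = a := by rw [ha', add_tsub_cancel_of_le hsub]
  
lemma PF_isPrime (F : Finset (Fin n)) : (PF (𝕜 := 𝕜) F).IsPrime := by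
  classical
  set gf : Fin n → MvPolynomial (Fin n) 𝕜 := fun i => if i ∈ F then 0 else X i with hgf
  have hker : PF (𝕜 := 𝕜) F = RingHom.ker (aeval (R := 𝕜) gf) := by
    apply le_antisymm
    · rw [PF, Ideal.span_le]
      rintro x ⟨d, ⟨i, hi, rfl⟩, rfl⟩
      rw [SetLike.mem_coe, RingHom.mem_ker]
      rw [aeval_monomial]
      have : (Finsupp.single i 1).prod (fun j k => gf j ^ k) = 0 := by
        rw [Finsupp.prod_single_index (by simp)]
        rw [hgf]; simp [Finset.mem_coe.mp hi]
      rw [this, mul_zero]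
    · intro f hf
      rw [RingHom.mem_ker] at hf
      have hkey : ∀ h : MvPolynomial (Fin n) 𝕜, h - aeval gf h ∈ PF (𝕜 := 𝕜) F := by
        intro h
        induction h using MvPolynomial.induction_on' with
        | monomial d c =>
            by_cases hd : ∃ i ∈ F, d i ≠ 0
            · obtain ⟨i, hi, hdi⟩ := hd
              have h0 : aeval gf (monomial d c) = 0 := by
                rw [aeval_monomial]
                have : d.prod (fun j k => gf j ^ k) = 0 := by
                  apply Finset.prod_eq_zero (Finsupp.mem_support_iff.mpr hdi)
                  rw [hgf]; simp [hi, zero_pow hdi]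
                rw [this, mul_zero]
              rw [h0, sub_zero, mem_PF_iff]
              intro b hb
              have hbd : b = d := Finset.mem_singleton.mp (support_monomial_subset hb)
              subst hbd
              exact ⟨i, hi, by omega⟩
            · push_neg at hd
              have h0 : aeval gf (monomial d c) = monomial d c := by
                rw [aeval_monomial]
                have : d.prod (fun j k => gf j ^ k) = d.prod (fun j k => X j ^ k) := by
                  apply Finsupp.prod_congr
                  intro i hi
                  have hiF : i ∉ F := fun hiF => (Finsupp.mem_support_iff.mp hi) (hd i hiF)
                  rw [hgf]; simp [hiF]
                rw [this, algebraMap_eq, ← monomial_eq]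
              rw [h0, sub_self]
              exact zero_mem _
        | add p q hp hq =>
            have heq : (p + q) - aeval gf (p + q) = (p - aeval gf p) + (q - aeval gf q) := by
              rw [map_add]; ring
            rw [heq]
            exact add_mem hp hq
      have := hkey f
      rwa [hf, sub_zero] at this
  rw [hker]
  exact RingHom.ker_isPrime _

/-- `F` is a transversal of `S` (vertex cover of the hypergraph). -/
def IsTransversal (S : Set (Finset (Fin n))) (F : Finset (Fin n)) : Prop :=
  ∀ s ∈ S, ∃ i ∈ s, i ∈ F

lemma sigma_apply (s : Finset (Fin n)) (i : Fin n) :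
    (∑ i' ∈ s, Finsupp.single i' (1 : ℕ)) i = if i ∈ s then 1 else 0 := by
  classical
  rw [Finset.sum_apply']
  simp only [Finsupp.single_apply]
  rw [Finset.sum_ite_eq' s i (fun _ => 1)]

lemma prodX_eq (s : Finset (Fin n)) : (∏ i ∈ s, (X i : MvPolynomial (Fin n) 𝕜))
    = monomial (∑ i ∈ s, Finsupp.single i 1) 1 := by
  rw [← prod_monomial_one s (fun i => Finsupp.single i 1)]
  rfl

lemma mem_sqf_iff_transversals {S : Set (Finset (Fin n))} {I : Ideal (MvPolynomial (Fin n) 𝕜)}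
    (hS : I = Ideal.span ((fun s => ∏ i ∈ s, X i) '' S)) (f : MvPolynomial (Fin n) 𝕜) :
    f ∈ I ↔ ∀ F : Finset (Fin n), IsTransversal S F → f ∈ PF (𝕜 := 𝕜) F := by
  classical
  have hI' : I = Ideal.span ((fun d => monomial d (1 : 𝕜)) ''
      ((fun s : Finset (Fin n) => ∑ i ∈ s, Finsupp.single i (1 : ℕ)) '' S)) := by
    rw [hS, ← Set.image_comp]
    congr 1
    exact Set.image_congr fun s _ => prodX_eq s
  constructor
  · intro hf F hF
    rw [hI', mem_ideal_span_monomial_image] at hf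
    rw [mem_PF_iff]
    intro b hb
    obtain ⟨si, ⟨s, hsS, rfl⟩, hle⟩ := hf b hb
    obtain ⟨i, his, hiF⟩ := hF s hsS
    refine ⟨i, hiF, ?_⟩
    have h1 := hle i
    rw [sigma_apply, if_pos his] at h1
    exact h1
  · intro hf
    rw [hI', mem_ideal_span_monomial_image]
    intro b hb
    by_contra hcon
    push_neg at hcon
    set F : Finset (Fin n) := Finset.univ.filter (fun i => b i = 0) with hFdef
    have hTrans : IsTransversal S F := by
      intro s hsS
      have hns := hcon _ ⟨s, hsS, rfl⟩
      have : ∃ i, ¬ ((∑ i' ∈ s, Finsupp.single i' (1 : ℕ)) i ≤ b i) := by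
        by_contra hcc
        push_neg at hcc
        exact hns fun i => hcc i
      obtain ⟨i, hi⟩ := this
      rw [sigma_apply] at hi
      by_cases his : i ∈ s
      · rw [if_pos his] at hi
        refine ⟨i, his, ?_⟩
        rw [hFdef, Finset.mem_filter]
        exact ⟨Finset.mem_univ _, by omega⟩
      · rw [if_neg his] at hi
        omega
    have hfF := hf F hTrans
    rw [mem_PF_iff] at hfF
    obtain ⟨i, hiF, h1⟩ := hfF b hb
    rw [hFdef, Finset.mem_filter] at hiF
    omega

lemma ass_eq_PF {S : Set (Finset (Fin n))} {I : Ideal (MvPolynomial (Fin n) 𝕜)}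
    (hS : I = Ideal.span ((fun s => ∏ i ∈ s, X i) '' S)) {p : Ideal (MvPolynomial (Fin n) 𝕜)}
    (hp : p ∈ associatedPrimes (MvPolynomial (Fin n) 𝕜) (MvPolynomial (Fin n) 𝕜 ⧸ I)) :
    ∃ F : Finset (Fin n), p = PF (𝕜 := 𝕜) F := by
  classical
  obtain ⟨hprime, x, hx⟩ := isAssociatedPrime_iff.mp hp
  obtain ⟨f, rfl⟩ := Submodule.Quotient.mk_surjective I x
  have hann : ∀ g, g ∈ p ↔ g * f ∈ I := by
    intro g
    rw [hx, Submodule.mem_colon_singleton, Submodule.mem_bot]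
    have : g • (Submodule.Quotient.mk f : MvPolynomial (Fin n) 𝕜 ⧸ I)
        = Submodule.Quotient.mk (g * f) := rfl
    rw [this, Submodule.Quotient.mk_eq_zero]
  set 𝔉 : Finset (Finset (Fin n)) :=
    Finset.univ.filter (fun F => IsTransversal S F ∧ f ∉ PF (𝕜 := 𝕜) F) with h𝔉
  have hpeq : p = 𝔉.inf (fun F => PF (𝕜 := 𝕜) F) := by
    apply le_antisymm
    · apply Finset.le_inf
      intro F hF
      rw [h𝔉, Finset.mem_filter] at hF
      obtain ⟨-, hT, hfnot⟩ := hF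
      intro g hg
      have hgf : g * f ∈ PF (𝕜 := 𝕜) F :=
        (mem_sqf_iff_transversals hS (g * f)).mp ((hann g).mp hg) F hT
      rcases (PF_isPrime F).mem_or_mem hgf with h | h
      · exact h
      · exact absurd h hfnot
    · intro g hg
      rw [Submodule.mem_finsetInf] at hg
      rw [hann, mem_sqf_iff_transversals hS]
      intro F hT
      by_cases hfF : f ∈ PF (𝕜 := 𝕜) F
      · exact Ideal.mul_mem_left _ g hfF
      · have hm : F ∈ 𝔉 := by
          rw [h𝔉, Finset.mem_filter]
          exact ⟨Finset.mem_univ _, hT, hfF⟩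
        exact Ideal.mul_mem_right _ _ (hg F hm)
  obtain ⟨F, hF𝔉, hle⟩ := (hprime.inf_le').mp (le_of_eq hpeq.symm)
  exact ⟨F, le_antisymm (hpeq ▸ Finset.inf_le hF𝔉) hle⟩

lemma sqf_eq_span_exps {S : Set (Finset (Fin n))} {I : Ideal (MvPolynomial (Fin n) 𝕜)}
    (hS : I = Ideal.span ((fun s => ∏ i ∈ s, X i) '' S)) :
    I = Ideal.span ((fun d => monomial d (1 : 𝕜)) '' {d | monomial d (1 : 𝕜) ∈ I}) := by
  apply le_antisymm
  · conv_lhs => rw [hS]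
    rw [Ideal.span_le]
    rintro x ⟨s, hsS, rfl⟩
    have hmem : (∏ i ∈ s, (X i : MvPolynomial (Fin n) 𝕜)) ∈ I :=
      hS ▸ Ideal.subset_span ⟨s, hsS, rfl⟩
    rw [prodX_eq] at hmem
    show (∏ i ∈ s, (X i : MvPolynomial (Fin n) 𝕜)) ∈ _
    rw [prodX_eq]
    exact Ideal.subset_span ⟨_, hmem, rfl⟩
  · rw [Ideal.span_le]
    rintro x ⟨d, hd, rfl⟩
    exact hd

open Classical in
lemma monomial_mem_symbolicPower_iff {S : Set (Finset (Fin n))} {I : Ideal (MvPolynomial (Fin n) 𝕜)}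
    (hS : I = Ideal.span ((fun s => ∏ i ∈ s, X i) '' S)) (m : ℕ) (a : Fin n →₀ ℕ) :
    monomial a (1 : 𝕜) ∈ symbolicPower I m ↔
      ∀ p ∈ associatedPrimes (MvPolynomial (Fin n) 𝕜) (MvPolynomial (Fin n) 𝕜 ⧸ I),
        m ≤ ∑ i ∈ Finset.univ.filter (fun i => (X i : MvPolynomial (Fin n) 𝕜) ∈ p), a i := by
  rw [symbolicPower]
  simp only [Submodule.mem_iInf]
  refine forall_congr' fun p => forall_congr' fun hp => ?_
  obtain ⟨F, rfl⟩ := ass_eq_PF hS hp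
  rw [monomial_mem_PF_pow_iff]
  have hFF : Finset.univ.filter (fun i => (X i : MvPolynomial (Fin n) 𝕜) ∈ PF (𝕜 := 𝕜) F) = F := by
    ext i
    simp [X_mem_PF_iff]
  rw [hFF]

lemma monomial_mem_symbolicPower_of_mem {S : Set (Finset (Fin n))}
    {I : Ideal (MvPolynomial (Fin n) 𝕜)}
    (hS : I = Ideal.span ((fun s => ∏ i ∈ s, X i) '' S)) {m : ℕ} {f : MvPolynomial (Fin n) 𝕜}
    (hf : f ∈ symbolicPower I m) {b : Fin n →₀ ℕ} (hb : b ∈ f.support) :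
    monomial b (1 : 𝕜) ∈ symbolicPower I m := by
  rw [symbolicPower] at hf ⊢
  simp only [Submodule.mem_iInf] at hf ⊢
  intro p hp
  obtain ⟨F, rfl⟩ := ass_eq_PF hS hp
  have h1 := hf _ hp
  simp only [PF] at h1 ⊢
  rw [span_mono_pow, mem_span_mono_iff_monomial] at h1
  rw [span_mono_pow]
  exact h1 b hb

open Classical in
lemma mem_symbolicPolyhedron_iff {I : Ideal (MvPolynomial (Fin n) 𝕜)} (y : Fin n → ℝ) :
    y ∈ symbolicPolyhedron I ↔
      ∀ p ∈ associatedPrimes (MvPolynomial (Fin n) 𝕜) (MvPolynomial (Fin n) 𝕜 ⧸ I),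
        (∀ i, 0 ≤ y i) ∧
          1 ≤ ∑ i : Fin n, if (X i : MvPolynomial (Fin n) 𝕜) ∈ p then y i else 0 := by
  rw [symbolicPolyhedron]
  rw [Set.mem_iInter₂]
  rfl

/-! ### Newton polyhedron lemmas -/

lemma newtonPolyhedron_nonneg {I : Ideal (MvPolynomial (Fin n) 𝕜)} {y : Fin n → ℝ}
    (hy : y ∈ newtonPolyhedron I) (i : Fin n) : 0 ≤ y i := by
  have hsub : newtonPolyhedron I ⊆ {z : Fin n → ℝ | ∀ j, 0 ≤ z j} := by
    rw [newtonPolyhedron]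
    apply convexHull_min
    · rintro x ⟨d, _, rfl⟩ j
      exact Nat.cast_nonneg _
    · intro u hu v hv a b ha hb _ j
      have h1 : 0 ≤ a * u j + b * v j := by
        have := hu j; have := hv j
        positivity
      simpa [smul_eq_mul] using h1
  exact hsub hy i

lemma newtonPolyhedron_add_mem {I : Ideal (MvPolynomial (Fin n) 𝕜)} {y v : Fin n → ℝ}
    (hy : y ∈ newtonPolyhedron I) (hv : ∀ i, 0 ≤ v i) : y + v ∈ newtonPolyhedron I := by
  classical
  have hgen : ∀ z ∈ {x : Fin n → ℝ | ∃ d : Fin n →₀ ℕ, monomial d (1 : 𝕜) ∈ I ∧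
      x = fun i => (d i : ℝ)}, ∀ w : Fin n → ℝ, (∀ i, 0 ≤ w i) → z + w ∈ newtonPolyhedron I := by
    rintro z ⟨d, hd, rfl⟩ w hw
    obtain ⟨N, hN⟩ := exists_nat_ge (∑ i, w i)
    set N' : ℕ := N + 1 with hN'def
    have hN'pos : (0 : ℝ) < N' := by positivity
    have hN'ge : ∑ i, w i ≤ (N' : ℝ) := by
      push_cast [hN'def]
      linarith
    set pts : Option (Fin n) → (Fin n → ℝ) := fun o =>
      Option.elim o (fun i => (d i : ℝ))
        (fun j => fun i => (d i : ℝ) + if j = i then (N' : ℝ) else 0) with hpts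
    set wts : Option (Fin n) → ℝ := fun o =>
      Option.elim o (1 - (∑ i, w i) / N') (fun j => w j / N') with hwts
    have hw0 : ∀ o ∈ Finset.univ, 0 ≤ wts o := by
      rintro (_ | j) _
      · simp only [hwts, Option.elim]
        rw [sub_nonneg, div_le_one hN'pos]
        exact hN'ge
      · simp only [hwts, Option.elim]
        exact div_nonneg (hw j) (le_of_lt hN'pos)
    have hw1 : ∑ o : Option (Fin n), wts o = 1 := by
      rw [Fintype.sum_option]
      simp only [hwts, Option.elim]
      rw [← Finset.sum_div]
      ring
    have hz : ∀ o ∈ Finset.univ, pts o ∈ {x : Fin n → ℝ | ∃ d : Fin n →₀ ℕ,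
        monomial d (1 : 𝕜) ∈ I ∧ x = fun i => (d i : ℝ)} := by
      rintro (_ | j) _
      · exact ⟨d, hd, rfl⟩
      · refine ⟨d + Finsupp.single j N', ?_, ?_⟩
        · have : monomial (d + Finsupp.single j N') (1 : 𝕜)
              = monomial d (1 : 𝕜) * monomial (Finsupp.single j N') (1 : 𝕜) := by
            rw [monomial_mul, one_mul]
          rw [this]
          exact Ideal.mul_mem_right _ _ hd
        · funext i
          simp only [hpts, Option.elim, Finsupp.add_apply, Finsupp.single_apply]
          push_cast [apply_ite (fun k : ℕ => (k : ℝ))]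
          rfl
    have hmem : Finset.univ.centerMass wts pts ∈ newtonPolyhedron I := by
      rw [newtonPolyhedron]
      exact Finset.centerMass_mem_convexHull _ hw0 (by rw [hw1]; norm_num) hz
    have hcm : Finset.univ.centerMass wts pts = (fun i => (d i : ℝ)) + w := by
      rw [Finset.centerMass_eq_of_sum_1 _ _ hw1]
      funext i
      rw [Finset.sum_apply]
      simp only [Pi.smul_apply, smul_eq_mul]
      rw [Fintype.sum_option]
      simp only [hwts, hpts, Option.elim]
      have hsplit : ∑ j : Fin n, (w j / N') * ((d i : ℝ) + if j = i then (N' : ℝ) else 0)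
          = (∑ j, w j) / N' * (d i : ℝ) + w i := by
        have e1 : ∀ j : Fin n, (w j / N') * ((d i : ℝ) + if j = i then (N' : ℝ) else 0)
            = (w j / N') * (d i : ℝ) + (if j = i then (w j / N') * (N' : ℝ) else 0) := by
          intro j
          by_cases h : j = i
          · simp only [if_pos h]; ring
          · simp only [if_neg h]; ring
        rw [Finset.sum_congr rfl fun j _ => e1 j, Finset.sum_add_distrib]
        congr 1
        · rw [← Finset.sum_mul, ← Finset.sum_div]
        · rw [Finset.sum_ite_eq' Finset.univ i (fun j => (w j / N') * (N' : ℝ))]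
          rw [if_pos (Finset.mem_univ i)]
          field_simp
      rw [hsplit]
      have hra : ((fun i => (d i : ℝ)) + w) i = (d i : ℝ) + w i := rfl
      rw [hra]
      field_simp
      ring
    rw [hcm] at hmem
    exact hmem
  have hC : Convex ℝ {z : Fin n → ℝ | z + v ∈ newtonPolyhedron I} := by
    intro z1 h1 z2 h2 a b ha hb hab
    have hrw : (a • z1 + b • z2) + v = a • (z1 + v) + b • (z2 + v) := by
      funext i
      simp only [Pi.add_apply, Pi.smul_apply, smul_eq_mul]
      linear_combination (-(v i)) * hab
    rw [Set.mem_setOf_eq, hrw]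
    exact (convex_convexHull ℝ _) h1 h2 ha hb hab
  have hsub : newtonPolyhedron I ⊆ {z : Fin n → ℝ | z + v ∈ newtonPolyhedron I} :=
    convexHull_min (fun z hz => hgen z hz v hv) hC
  exact hsub hy

/-! ### Integral closure lemmas -/

lemma zero_mem_idealIntegralClosure {R : Type*} [CommRing R] (J : Ideal R) :
    (0 : R) ∈ idealIntegralClosure J := by
  refine ⟨1, one_pos, fun _ => 0, fun i _ => zero_mem _, by simp⟩

lemma pow_mem_idealIntegralClosure {R : Type*} [CommRing R] {J : Ideal R} {x : R} {k : ℕ}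
    (hk : 0 < k) (h : x ^ k ∈ J ^ k) : x ∈ idealIntegralClosure J := by
  refine ⟨k, hk, fun i => if i = k then -(x ^ k) else 0, ?_, ?_⟩
  · intro i hi
    by_cases hik : i = k
    · subst hik
      simpa using neg_mem h
    · simp [hik]
  · rw [Finset.sum_eq_single_of_mem k (Finset.mem_Icc.mpr ⟨hk, le_refl k⟩)]
    · simp
    · intro i _ hik
      simp [hik]

lemma exps_of_mem_idealIntegralClosure {E : Set (Fin n →₀ ℕ)} {a : Fin n →₀ ℕ}
    (h : monomial a (1 : 𝕜) ∈
      idealIntegralClosure (Ideal.span ((fun d => monomial d (1 : 𝕜)) '' E))) :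
    ∃ k, 0 < k ∧
      monomial (k • a) (1 : 𝕜) ∈ (Ideal.span ((fun d => monomial d (1 : 𝕜)) '' E)) ^ k := by
  classical
  obtain ⟨m, hm, c, hc, heq⟩ := h
  have hco := congrArg (coeff (m • a)) heq
  rw [coeff_add, coeff_zero, coeff_sum] at hco
  have h1 : coeff (m • a) ((monomial a (1 : 𝕜)) ^ m) = 1 := by
    rw [monomial_pow, one_pow, coeff_monomial, if_pos rfl]
  have h2 : ∀ i ∈ Finset.Icc 1 m, coeff (m • a) (c i * (monomial a (1 : 𝕜)) ^ (m - i))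
      = coeff (i • a) (c i) := by
    intro i hi
    rw [monomial_pow, one_pow, coeff_mul_monomial']
    have hle : (m - i) • a ≤ m • a := by
      intro j
      simp only [Finsupp.smul_apply, smul_eq_mul]
      exact Nat.mul_le_mul_right _ (Nat.sub_le _ _)
    rw [if_pos hle, mul_one]
    congr 1
    ext j
    simp only [Finsupp.tsub_apply, Finsupp.smul_apply, smul_eq_mul]
    rw [← Nat.sub_mul]
    have him := Finset.mem_Icc.mp hi
    congr 1
    omega
  rw [h1, Finset.sum_congr rfl h2] at hco
  have hex : ∃ i ∈ Finset.Icc 1 m, coeff (i • a) (c i) ≠ 0 := by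
    by_contra hcon
    push_neg at hcon
    rw [Finset.sum_eq_zero hcon, add_zero] at hco
    exact one_ne_zero hco
  obtain ⟨i, hi, hne⟩ := hex
  refine ⟨i, (Finset.mem_Icc.mp hi).1, ?_⟩
  have hci := hc i hi
  rw [span_mono_pow, mem_span_mono_iff_monomial] at hci
  rw [span_mono_pow]
  exact hci _ (MvPolynomial.mem_support_iff.mpr hne)

lemma mem_pow_of_support {S : Set (Finset (Fin n))} {I : Ideal (MvPolynomial (Fin n) 𝕜)}
    (hS : I = Ideal.span ((fun s => ∏ i ∈ s, X i) '' S)) {M : ℕ} {f : MvPolynomial (Fin n) 𝕜}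
    (h : ∀ c ∈ f.support, monomial c (1 : 𝕜) ∈ I ^ M) : f ∈ I ^ M := by
  have hIE := sqf_eq_span_exps hS
  rw [hIE, span_mono_pow, mem_span_mono_iff_monomial]
  intro c hc
  rw [← span_mono_pow, ← hIE]
  exact h c hc

lemma mem_NP_of_monomial_mem_integralClosure {S : Set (Finset (Fin n))}
    {I : Ideal (MvPolynomial (Fin n) 𝕜)}
    (hS : I = Ideal.span ((fun s => ∏ i ∈ s, X i) '' S)) {N : ℕ} (hN : 0 < N) {a : Fin n →₀ ℕ}
    (h : monomial a (1 : 𝕜) ∈ idealIntegralClosure (I ^ N)) :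
    (fun i => (a i : ℝ) / (N : ℝ)) ∈ newtonPolyhedron I := by
  classical
  have hIE := sqf_eq_span_exps hS
  have hpow : I ^ N = Ideal.span ((fun d => monomial d (1 : 𝕜)) ''
      sumSet {d | monomial d (1 : 𝕜) ∈ I} N) := by
    conv_lhs => rw [hIE]
    rw [span_mono_pow]
  rw [hpow] at h
  obtain ⟨k, hk, hmem⟩ := exps_of_mem_idealIntegralClosure h
  rw [← hpow, ← pow_mul] at hmem
  rw [hIE, monomial_mem_pow_span_mono_iff] at hmem
  obtain ⟨g, hgE, hle⟩ := hmem
  have hNk : (0 : ℝ) < ((N * k : ℕ) : ℝ) := by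
    have : 0 < N * k := Nat.mul_pos hN hk
    exact_mod_cast this
  set wts : Fin (N * k) → ℝ := fun _ => ((N * k : ℕ) : ℝ)⁻¹ with hwts
  have hw1 : ∑ j : Fin (N * k), wts j = 1 := by
    rw [Finset.sum_const, Finset.card_univ, Fintype.card_fin]
    rw [nsmul_eq_mul]
    field_simp
  have hz : Finset.univ.centerMass wts (fun j => fun i => ((g j) i : ℝ))
      ∈ newtonPolyhedron I := by
    rw [newtonPolyhedron]
    refine Finset.centerMass_mem_convexHull _ (fun j _ => by positivity)
      (by rw [hw1]; norm_num) (fun j _ => ⟨g j, hgE j, rfl⟩)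
  set z := Finset.univ.centerMass wts (fun j => fun i => ((g j) i : ℝ)) with hzdef
  have hzi : ∀ i, z i = (∑ j, ((g j) i : ℝ)) / ((N * k : ℕ) : ℝ) := by
    intro i
    rw [hzdef, Finset.centerMass_eq_of_sum_1 _ _ hw1, Finset.sum_apply]
    simp only [Pi.smul_apply, smul_eq_mul, hwts]
    rw [Finset.sum_congr rfl fun j _ => inv_mul_eq_div (((N * k : ℕ) : ℝ)) (((g j) i : ℝ))]
    rw [← Finset.sum_div]
  have hzle : ∀ i, z i ≤ (a i : ℝ) / (N : ℝ) := by
    intro i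
    rw [hzi]
    have hcast : (∑ j, ((g j) i : ℝ)) ≤ (k : ℝ) * (a i : ℝ) := by
      have hn : (∑ j, (g j) i) ≤ k * a i := by
        have := hle i
        rw [Finset.sum_apply'] at this
        simpa [Finsupp.smul_apply, smul_eq_mul] using this
      calc (∑ j, ((g j) i : ℝ)) = ((∑ j, (g j) i : ℕ) : ℝ) := by push_cast; ring
        _ ≤ ((k * a i : ℕ) : ℝ) := by exact_mod_cast hn
        _ = (k : ℝ) * (a i : ℝ) := by push_cast; ring
    rw [div_le_div_iff₀ hNk (show (0:ℝ) < (N:ℝ) by exact_mod_cast hN)]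
    push_cast
    nlinarith [hcast, (Nat.cast_pos.mpr hk : (0:ℝ) < (k:ℕ)), (Nat.cast_pos.mpr hN : (0:ℝ) < (N:ℕ))]
  have hfin : (fun i => (a i : ℝ) / (N : ℝ)) = z + fun i => ((a i : ℝ) / N - z i) := by
    funext i
    simp
  rw [hfin]
  exact newtonPolyhedron_add_mem hz (fun i => by simpa using hzle i)

/-- The key certificate lemma: if `μ·w = b/Rt` with `w ∈ NP(I)` and `μ > 1`, then some
multiple `D·b` of `b` is the exponent of a monomial in `I^(Rt·D + 1)`. -/
lemma exists_cert {I : Ideal (MvPolynomial (Fin n) 𝕜)} {b : Fin n →₀ ℕ} {w : Fin n → ℝ}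
    (hw : w ∈ newtonPolyhedron I) {μ : ℝ} (hμ : 1 < μ) {Rt : ℕ} (hRt : 0 < Rt)
    (heq : ∀ i, (Rt : ℝ) * (μ * w i) = (b i : ℝ)) :
    ∃ D : ℕ, 0 < D ∧ monomial (D • b) (1 : 𝕜) ∈ I ^ (Rt * D + 1) := by
  classical
  rw [newtonPolyhedron, convexHull_eq] at hw
  obtain ⟨ι, t, wt, z, hwt0, hwt1, hzmem, hcm⟩ := hw
  have hch : ∀ j ∈ t, ∃ dd : Fin n →₀ ℕ, monomial dd (1 : 𝕜) ∈ I ∧ z j = fun i => (dd i : ℝ) :=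
    fun j hj => hzmem j hj
  choose! dd hddI hddz using hch
  have hwi : ∀ i, w i = ∑ j ∈ t, wt j * (dd j i : ℝ) := by
    intro i
    rw [← hcm, Finset.centerMass_eq_of_sum_1 _ _ hwt1, Finset.sum_apply]
    refine Finset.sum_congr rfl fun j hj => ?_
    rw [Pi.smul_apply, smul_eq_mul, hddz j hj]
  have hRtR : (0 : ℝ) < (Rt : ℝ) := by exact_mod_cast hRt
  set μ₁ := (1 + μ) / 2 with hμ₁def
  have hμ₁a : 1 < μ₁ := by rw [hμ₁def]; linarith
  have hμ₁b : μ₁ < μ := by rw [hμ₁def]; linarith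
  obtain ⟨D, hDge⟩ := exists_nat_ge (1 / ((Rt : ℝ) * (μ₁ - 1)) +
    ∑ j ∈ t, (if 0 < wt j then 1 / ((Rt : ℝ) * (μ - μ₁) * wt j) else 0))
  have hterm_nonneg : ∀ j ∈ t, (0:ℝ) ≤ if 0 < wt j then 1 / ((Rt : ℝ) * (μ - μ₁) * wt j) else 0 := by
    intro j _
    by_cases h : 0 < wt j
    · rw [if_pos h]
      have : (0:ℝ) < (Rt : ℝ) * (μ - μ₁) * wt j := by
        apply mul_pos (mul_pos hRtR (by linarith)) h
      positivity
    · rw [if_neg h]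
  have hsum_nonneg : (0:ℝ) ≤ ∑ j ∈ t, (if 0 < wt j then 1 / ((Rt : ℝ) * (μ - μ₁) * wt j) else 0) :=
    Finset.sum_nonneg hterm_nonneg
  have hD1R : 1 / ((Rt : ℝ) * (μ₁ - 1)) ≤ (D : ℝ) := by linarith
  have hD0 : 0 < D := by
    by_contra hc
    push_neg at hc
    interval_cases D
    have : (0:ℝ) < 1 / ((Rt : ℝ) * (μ₁ - 1)) := by
      have : (0:ℝ) < (Rt : ℝ) * (μ₁ - 1) := mul_pos hRtR (by linarith)
      positivity
    simp only [Nat.cast_zero] at hD1R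
    linarith
  have hDR : (0:ℝ) < (D : ℝ) := by exact_mod_cast hD0
  have hD1 : 1 ≤ (Rt : ℝ) * (D : ℝ) * (μ₁ - 1) := by
    have hpos : (0:ℝ) < (Rt : ℝ) * (μ₁ - 1) := mul_pos hRtR (by linarith)
    rw [div_le_iff₀ hpos] at hD1R
    nlinarith
  have hDj : ∀ j ∈ t, 0 < wt j → 1 ≤ (Rt : ℝ) * (D : ℝ) * (μ - μ₁) * wt j := by
    intro j hj hwj
    have hle1 : 1 / ((Rt : ℝ) * (μ - μ₁) * wt j) ≤
        ∑ j' ∈ t, (if 0 < wt j' then 1 / ((Rt : ℝ) * (μ - μ₁) * wt j') else 0) := by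
      have := Finset.single_le_sum hterm_nonneg hj
      rwa [if_pos hwj] at this
    have hDge' : 1 / ((Rt : ℝ) * (μ - μ₁) * wt j) ≤ (D : ℝ) := by
      have h0 : (0:ℝ) ≤ 1 / ((Rt : ℝ) * (μ₁ - 1)) := by
        have : (0:ℝ) < (Rt : ℝ) * (μ₁ - 1) := mul_pos hRtR (by linarith)
        positivity
      linarith
    have hpos : (0:ℝ) < (Rt : ℝ) * (μ - μ₁) * wt j :=
      mul_pos (mul_pos hRtR (by linarith)) hwj
    rw [div_le_iff₀ hpos] at hDge'
    nlinarith
  set k : ι → ℕ := fun j => ⌈(D : ℝ) * μ₁ * (Rt : ℝ) * wt j⌉₊ with hkdef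
  have hα : Rt * D + 1 ≤ ∑ j ∈ t, k j := by
    have hreal : ((Rt * D + 1 : ℕ) : ℝ) ≤ ((∑ j ∈ t, k j : ℕ) : ℝ) := by
      push_cast
      calc (Rt : ℝ) * (D : ℝ) + 1 ≤ (Rt : ℝ) * (D : ℝ) * μ₁ := by nlinarith
        _ = ∑ j ∈ t, (D : ℝ) * μ₁ * (Rt : ℝ) * wt j := by
            rw [← Finset.mul_sum, hwt1]; ring
        _ ≤ ∑ j ∈ t, ((k j : ℕ) : ℝ) := Finset.sum_le_sum fun j _ => Nat.le_ceil _
    exact_mod_cast hreal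
  have hβ : (∑ j ∈ t, k j • dd j) ≤ D • b := by
    intro i
    have hreal : ((((∑ j ∈ t, k j • dd j)) i : ℕ) : ℝ) ≤ (((D • b) i : ℕ) : ℝ) := by
      have hlhs : (((∑ j ∈ t, k j • dd j) i : ℕ) : ℝ) = ∑ j ∈ t, (k j : ℝ) * (dd j i : ℝ) := by
        rw [Finset.sum_apply']
        push_cast [Finsupp.smul_apply, smul_eq_mul]
        rfl
      have hrhs : (((D • b) i : ℕ) : ℝ) = (D : ℝ) * (b i : ℝ) := by
        push_cast [Finsupp.smul_apply, smul_eq_mul]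
        rfl
      rw [hlhs, hrhs]
      have hterm : ∀ j ∈ t, (k j : ℝ) * (dd j i : ℝ)
          ≤ (D : ℝ) * (Rt : ℝ) * μ * wt j * (dd j i : ℝ) := by
        intro j hj
        by_cases hwj : 0 < wt j
        · have hkle : (k j : ℝ) ≤ (D : ℝ) * (Rt : ℝ) * μ * wt j := by
            have h1 : ((k j : ℕ) : ℝ) < (D : ℝ) * μ₁ * (Rt : ℝ) * wt j + 1 :=
              Nat.ceil_lt_add_one (by positivity)
            have h2 := hDj j hj hwj
            nlinarith
          exact mul_le_mul_of_nonneg_right hkle (Nat.cast_nonneg _)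
        · have hwj0 : wt j = 0 := le_antisymm (not_lt.mp hwj) (hwt0 j hj)
          have : k j = 0 := by
            rw [hkdef]
            simp [hwj0]
          rw [this, hwj0]
          simp
      calc ∑ j ∈ t, (k j : ℝ) * (dd j i : ℝ)
          ≤ ∑ j ∈ t, (D : ℝ) * (Rt : ℝ) * μ * wt j * (dd j i : ℝ) :=
            Finset.sum_le_sum hterm
        _ = (D : ℝ) * ((Rt : ℝ) * (μ * (∑ j ∈ t, wt j * (dd j i : ℝ)))) := by
            rw [Finset.mul_sum, Finset.mul_sum, Finset.mul_sum]
            exact Finset.sum_congr rfl fun j _ => by ring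
        _ = (D : ℝ) * (b i : ℝ) := by rw [← hwi i, heq i]
    exact_mod_cast hreal
  have hprod : monomial (∑ j ∈ t, k j • dd j) (1 : 𝕜) ∈ I ^ (∑ j ∈ t, k j) := by
    rw [← prod_monomial_one]
    refine prod_mem_pow_sum t k _ fun j hj => ?_
    have := Ideal.pow_mem_pow (hddI j hj) (k j)
    rwa [monomial_pow, one_pow] at this
  have hmem := monomial_mem_pow_of_le hβ hprod
  exact ⟨D, hD0, Ideal.pow_le_pow_right hα hmem⟩

lemma support_pow_decomp (f : MvPolynomial (Fin n) 𝕜) (K : ℕ) :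
    ∀ c ∈ (f ^ K).support, ∃ ν : (Fin n →₀ ℕ) → ℕ,
      (∑ b ∈ f.support, ν b = K) ∧ c = ∑ b ∈ f.support, ν b • b := by
  classical
  induction K with
  | zero =>
      intro c hc
      rw [pow_zero] at hc
      have h1 : (1 : MvPolynomial (Fin n) 𝕜) = monomial 0 1 := by
        rw [monomial_zero']
        simp
      rw [h1] at hc
      have hc0 : c = 0 := Finset.mem_singleton.mp (support_monomial_subset hc)
      exact ⟨fun _ => 0, by simp, by simp [hc0]⟩
  | succ K ih =>
      intro c hc
      rw [pow_succ] at hc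
      have hsub := support_mul (f ^ K) f hc
      rw [Finset.mem_add] at hsub
      obtain ⟨c1, hc1, b', hb', rfl⟩ := hsub
      obtain ⟨ν, hν1, hν2⟩ := ih c1 hc1
      refine ⟨fun x => ν x + if x = b' then 1 else 0, ?_, ?_⟩
      · rw [Finset.sum_add_distrib, hν1]
        rw [Finset.sum_ite_eq' f.support b' (fun _ => 1), if_pos hb']
      · have e1 : ∀ x ∈ f.support, (ν x + if x = b' then 1 else 0) • x
            = ν x • x + (if x = b' then x else 0) := by
          intro x _
          by_cases h : x = b'
          · simp [h, add_smul]
          · simp [h]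
        rw [Finset.sum_congr rfl e1, Finset.sum_add_distrib]
        rw [Finset.sum_ite_eq' f.support b' (fun x => x), if_pos hb', hν2]

lemma ereal_le_sSup {T : Set EReal} {c : ℝ} (hc : 0 < c)
    (h : ∀ u : ℚ, 0 < (u : ℝ) → (u : ℝ) < c → (((u : ℝ) : EReal) ∈ T)) :
    (c : EReal) ≤ sSup T := by
  rw [le_sSup_iff]
  intro b hb
  by_contra hbc
  push_neg at hbc
  induction b using EReal.rec with
  | bot =>
      obtain ⟨q, hq0, hqc⟩ := exists_rat_btwn hc
      have := hb (h q (by exact_mod_cast hq0) hqc)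
      exact (EReal.coe_ne_bot _) (le_bot_iff.mp this)
  | coe a =>
      have hac : a < c := by exact_mod_cast hbc
      have hmax : max a 0 < c := max_lt hac hc
      obtain ⟨q, hq1, hq2⟩ := exists_rat_btwn hmax
      have hq0 : 0 < (q : ℝ) := lt_of_le_of_lt (le_max_right a 0) hq1
      have hqa : a < (q : ℝ) := lt_of_le_of_lt (le_max_left a 0) hq1
      have := hb (h q hq0 hq2)
      rw [EReal.coe_le_coe_iff] at this
      linarith
  | top => exact not_top_lt hbc

end SqfAux

set_option maxHeartbeats 2000000 in
/-- equation (eq.V). For a nonzero proper squarefree monomial ideal `I` in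
`k[x_1,…,x_n]`, `ρ̂(I^{(•)}, overline(I^•)) = sup{λ > 0 : λ·SP(I) ⊄ NP(I)}`. -/
theorem asymptoticResurgence_symbolic_eq_supScaleNotSubset
    (I : Ideal (MvPolynomial (Fin n) 𝕜))
    (hISqf : IsSqfreeMonomialIdeal I) (hI0 : I ≠ ⊥) (hI1 : I ≠ ⊤) :
    asymptoticResurgence (symbolicPower I) (fun t => idealIntegralClosure (I ^ t)) =
      supScaleNotSubset (symbolicPolyhedron I) (newtonPolyhedron I) := by
  classical
  obtain ⟨S, hS⟩ := hISqf
  haveI : Nontrivial (MvPolynomial (Fin n) 𝕜 ⧸ I) := Ideal.Quotient.nontrivial_iff.mpr hI1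
  obtain ⟨p₀, hp₀⟩ := associatedPrimes.nonempty (MvPolynomial (Fin n) 𝕜)
    (MvPolynomial (Fin n) 𝕜 ⧸ I)
  rw [asymptoticResurgence, supScaleNotSubset]
  apply le_antisymm
  · -- LHS ≤ RHS
    apply sSup_le
    rintro y ⟨s, r, hs, hr, hev, rfl⟩
    have hsR : (0:ℝ) < (s:ℝ) := by exact_mod_cast hs
    have hrR : (0:ℝ) < (r:ℝ) := by exact_mod_cast hr
    have hsr : (0:ℝ) < (s:ℝ)/(r:ℝ) := div_pos hsR hrR
    apply SqfAux.ereal_le_sSup hsr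
    intro u hu0 huc
    refine ⟨(u:ℝ), hu0, ?_, rfl⟩
    intro hcon
    -- Argument A : derive a contradiction
    obtain ⟨t0, ht0⟩ := Filter.eventually_atTop.mp hev
    set t := max t0 1 with htdef
    have ht1 : 1 ≤ t := le_max_right _ _
    have hnc := ht0 t (le_max_left _ _)
    rw [Set.not_subset] at hnc
    obtain ⟨f, hfmem, hfnot⟩ := hnc
    have hfI : f ∈ symbolicPower I (s * t) := hfmem
    have hf0 : f ≠ 0 := by
      rintro rfl
      exact hfnot (SqfAux.zero_mem_idealIntegralClosure _)
    have hstpos : 0 < s * t := Nat.mul_pos (by omega) (by omega)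
    have hrtpos : 0 < r * t := Nat.mul_pos (by omega) (by omega)
    have hstR : (0:ℝ) < ((s*t : ℕ):ℝ) := by exact_mod_cast hstpos
    have hrtR : (0:ℝ) < ((r*t : ℕ):ℝ) := by exact_mod_cast hrtpos
    set μ : ℝ := ((s*t : ℕ):ℝ) / (((r*t : ℕ):ℝ) * (u:ℝ)) with hμdef
    have hμ1 : 1 < μ := by
      rw [hμdef, lt_div_iff₀ (by positivity)]
      have h1 : (u:ℝ) * (r:ℝ) < (s:ℝ) := (lt_div_iff₀ hrR).mp huc
      have ht0R : (0:ℝ) < (t:ℝ) := by exact_mod_cast (by omega : 0 < t)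
      push_cast
      nlinarith [mul_lt_mul_of_pos_right h1 ht0R]
    have hcert : ∀ b ∈ f.support, ∃ D : ℕ, 0 < D ∧
        monomial (D • b) (1:𝕜) ∈ I ^ ((r*t) * D + 1) := by
      intro b hb
      have hbmem := SqfAux.monomial_mem_symbolicPower_of_mem hS hfI hb
      rw [SqfAux.monomial_mem_symbolicPower_iff hS] at hbmem
      have hbSP : (fun i => (b i : ℝ) / ((s*t:ℕ):ℝ)) ∈ symbolicPolyhedron I := by
        rw [SqfAux.mem_symbolicPolyhedron_iff]
        intro p hp
        constructor
        · intro i; positivity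
        · have h2 := hbmem p hp
          have h3 : ((s*t:ℕ):ℝ) ≤
              ∑ i ∈ Finset.univ.filter (fun i => (X i : MvPolynomial (Fin n) 𝕜) ∈ p),
                (b i : ℝ) := by
            have h3' : ((s*t:ℕ):ℝ) ≤
                ((∑ i ∈ Finset.univ.filter (fun i => (X i : MvPolynomial (Fin n) 𝕜) ∈ p),
                  b i : ℕ) : ℝ) := by exact_mod_cast h2
            rw [Nat.cast_sum] at h3'
            exact h3'
          rw [Finset.sum_filter] at h3
          have h4 : ∑ i : Fin n,
                (if (X i : MvPolynomial (Fin n) 𝕜) ∈ p then (b i : ℝ)/((s*t:ℕ):ℝ) else 0)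
              = (∑ i : Fin n, if (X i : MvPolynomial (Fin n) 𝕜) ∈ p then (b i : ℝ) else 0)
                  / ((s*t:ℕ):ℝ) := by
            rw [Finset.sum_div]
            refine Finset.sum_congr rfl fun i _ => ?_
            by_cases h : (X i : MvPolynomial (Fin n) 𝕜) ∈ p
            · simp [h]
            · simp [h]
          rw [h4, le_div_iff₀ hstR, one_mul]
          exact h3
      have hwNP : ((u:ℝ) • (fun i => (b i : ℝ)/((s*t:ℕ):ℝ))) ∈ newtonPolyhedron I :=
        hcon (Set.smul_mem_smul_set hbSP)
      refine SqfAux.exists_cert hwNP hμ1 hrtpos ?_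
      intro i
      have hwib : ((u:ℝ) • (fun i => (b i : ℝ)/((s*t:ℕ):ℝ))) i
          = (u:ℝ) * ((b i:ℝ)/((s*t:ℕ):ℝ)) := rfl
      rw [hwib, hμdef]
      have hu0' : (u:ℝ) ≠ 0 := ne_of_gt hu0
      have hst' : ((s*t:ℕ):ℝ) ≠ 0 := ne_of_gt hstR
      have hrt' : ((r*t:ℕ):ℝ) ≠ 0 := ne_of_gt hrtR
      field_simp
    choose! Df hDf0 hDfmem using hcert
    set D : ℕ := ∏ b ∈ f.support, Df b with hDdef
    have hDpos : 0 < D := Finset.prod_pos (fun b hb => hDf0 b hb)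
    have hDmem : ∀ b ∈ f.support, monomial (D • b) (1:𝕜) ∈ I ^ ((r*t) * D + 1) := by
      intro b hb
      obtain ⟨q, hq⟩ := Finset.dvd_prod_of_mem Df hb
      rw [← hDdef] at hq
      have hq0 : 0 < q := by
        rcases Nat.eq_zero_or_pos q with h | h
        · rw [h, mul_zero] at hq
          omega
        · exact h
      have hmem := Ideal.pow_mem_pow (hDfmem b hb) q
      rw [monomial_pow, one_pow, ← pow_mul, smul_smul] at hmem
      have hqD : q * Df b = D := by rw [hq]; ring
      rw [hqD] at hmem
      refine Ideal.pow_le_pow_right ?_ hmem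
      have hexp : ((r*t)*(Df b) + 1)*q = (r*t)*(Df b)*q + q := by ring
      have hlin : (r*t)*D = (r*t)*(Df b)*q := by rw [hq]; ring
      omega
    set Bc := f.support.card with hBc
    have hBc1 : 1 ≤ Bc := Finset.card_pos.mpr (MvPolynomial.support_nonempty.mpr hf0)
    set N := (r*t)*D + 1 with hNdef
    set M := N * Bc with hMdef
    have hN0 : 0 < N := by omega
    have hM0 : 0 < M := by
      rw [hMdef]
      exact Nat.mul_pos hN0 (by omega)
    have hfK : f ^ (M * D) ∈ I ^ ((r*t) * (M * D)) := by
      apply SqfAux.mem_pow_of_support hS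
      intro c hc
      obtain ⟨ν, hν1, hν2⟩ := SqfAux.support_pow_decomp f (M*D) c hc
      have hstep : ∀ b ∈ f.support,
          monomial (((ν b / D) * D) • b) (1:𝕜) ∈ I ^ (N * (ν b / D)) := by
        intro b hb
        have hmem := Ideal.pow_mem_pow (hDmem b hb) (ν b / D)
        rw [monomial_pow, one_pow, ← pow_mul, smul_smul] at hmem
        exact hmem
      have hprod : monomial (∑ b ∈ f.support, ((ν b / D) * D) • b) (1:𝕜)
          ∈ I ^ (∑ b ∈ f.support, N * (ν b / D)) := by
        rw [← SqfAux.prod_monomial_one]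
        exact SqfAux.prod_mem_pow_sum _ _ _ hstep
      have hle2 : (∑ b ∈ f.support, ((ν b / D) * D) • b) ≤ c := by
        rw [hν2]
        refine Finset.sum_le_sum fun b hb => ?_
        intro i
        simp only [Finsupp.smul_apply, smul_eq_mul]
        exact Nat.mul_le_mul_right _ (Nat.div_mul_le_self _ _)
      have hcount : (r*t) * (M * D) ≤ ∑ b ∈ f.support, N * (ν b / D) := by
        set Q := ∑ b ∈ f.support, ν b / D with hQ
        have hsum_eq : ∑ b ∈ f.support, N * (ν b / D) = N * Q := by
          rw [hQ, Finset.mul_sum]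
        have hMQ : M ≤ Q + Bc := by
          have h1 : ∀ b ∈ f.support, ν b + 1 ≤ D * (ν b / D) + D := by
            intro b _
            have hdm := Nat.div_add_mod (ν b) D
            have hml := Nat.mod_lt (ν b) hDpos
            omega
          have h2 : M * D + Bc ≤ D * Q + D * Bc := by
            calc M * D + Bc = (∑ b ∈ f.support, ν b) + ∑ b ∈ f.support, 1 := by
                  rw [hν1, Finset.sum_const, smul_eq_mul, mul_one]
              _ = ∑ b ∈ f.support, (ν b + 1) := by rw [← Finset.sum_add_distrib]
              _ ≤ ∑ b ∈ f.support, (D * (ν b / D) + D) := Finset.sum_le_sum h1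
              _ = D * Q + D * Bc := by
                  rw [Finset.sum_add_distrib, ← Finset.mul_sum, Finset.sum_const, smul_eq_mul]
                  ring
          have h3 : M * D < (Q + Bc + 1) * D := by
            have h4 : M * D ≤ D * (Q + Bc) := by
              calc M * D ≤ M * D + Bc := Nat.le_add_right _ _
                _ ≤ D * Q + D * Bc := h2
                _ = D * (Q + Bc) := by ring
            calc M * D ≤ D * (Q + Bc) := h4
              _ < D * (Q + Bc) + D := Nat.lt_add_of_pos_right hDpos
              _ = (Q + Bc + 1) * D := by ring
          have h5 := lt_of_mul_lt_mul_right h3 (Nat.zero_le D)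
          omega
        have hM' : M = (r*t)*D*Bc + Bc := by rw [hMdef, hNdef]; ring
        have hQge : (r*t)*D*Bc ≤ Q := by omega
        calc (r*t) * (M * D) = N * ((r*t)*D*Bc) := by rw [hMdef, hNdef]; ring
          _ ≤ N * Q := Nat.mul_le_mul_left _ hQge
          _ = ∑ b ∈ f.support, N * (ν b / D) := hsum_eq.symm
      exact Ideal.pow_le_pow_right hcount (SqfAux.monomial_mem_pow_of_le hle2 hprod)
    apply hfnot
    refine SqfAux.pow_mem_idealIntegralClosure (k := M * D) (Nat.mul_pos hM0 hDpos) ?_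
    rw [← pow_mul]
    exact hfK
  · -- RHS ≤ LHS
    apply sSup_le
    rintro y ⟨l, hl, hns, rfl⟩
    apply SqfAux.ereal_le_sSup hl
    intro u hu0 hul
    obtain ⟨y', hy', hyNP⟩ := Set.not_subset.mp hns
    rw [Set.mem_smul_set] at hy'
    obtain ⟨x, hxSP, rfl⟩ := hy'
    rw [SqfAux.mem_symbolicPolyhedron_iff] at hxSP
    have hx0 : ∀ i, 0 ≤ x i := (hxSP p₀ hp₀).1
    have hx1 : ∀ p ∈ associatedPrimes (MvPolynomial (Fin n) 𝕜) (MvPolynomial (Fin n) 𝕜 ⧸ I),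
        1 ≤ ∑ i : Fin n, if (X i : MvPolynomial (Fin n) 𝕜) ∈ p then x i else 0 :=
      fun p hp => (hxSP p hp).2
    set s : ℕ := u.num.toNat with hsdef
    set r : ℕ := u.den with hrdef
    have hnum : 0 < u.num := Rat.num_pos.mpr (by exact_mod_cast hu0)
    have hs1 : 1 ≤ s := by omega
    have hr1 : 1 ≤ r := u.pos
    have hrR : (0:ℝ) < (r:ℝ) := by exact_mod_cast hr1
    have hsrR : ((s:ℝ))/(r:ℝ) = (u:ℝ) := by
      rw [Rat.cast_def]
      congr 1
      rw [hsdef]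
      exact_mod_cast congrArg (fun z : ℤ => ((z:ℝ))) (Int.toNat_of_nonneg (le_of_lt hnum))
    refine ⟨s, r, hs1, hr1, ?_, by rw [hsrR]⟩
    set l'' : ℝ := ((u:ℝ) + l)/2 with hl''def
    have hul'' : (u:ℝ) < l'' := by rw [hl''def]; linarith
    have hl''l : l'' < l := by rw [hl''def]; linarith
    have hl''0 : 0 < l'' := by rw [hl''def]; linarith
    have hl''NP : (fun i => l'' * x i) ∉ newtonPolyhedron I := by
      intro hmem
      apply hyNP
      have hfe : l • x = (fun i => l'' * x i) + (fun i => (l - l'') * x i) := by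
        funext i
        show l * x i = l'' * x i + (l - l'') * x i
        ring
      rw [hfe]
      exact SqfAux.newtonPolyhedron_add_mem hmem
        (fun i => mul_nonneg (by linarith) (hx0 i))
    have hxpos : ∃ i, 0 < x i := by
      by_contra hcon
      push_neg at hcon
      have h0 : ∀ i, x i = 0 := fun i => le_antisymm (hcon i) (hx0 i)
      have h1 := hx1 p₀ hp₀
      rw [Finset.sum_eq_zero (fun i _ => by rw [h0 i]; simp)] at h1
      linarith
    set P : Finset (Fin n) := Finset.univ.filter (fun i => 0 < x i) with hPdef
    have hPne : P.Nonempty := by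
      obtain ⟨i, hi⟩ := hxpos
      exact ⟨i, by rw [hPdef]; simp [hi]⟩
    set εm : ℝ := P.inf' hPne (fun i => x i) with hεdef
    have hεpos : 0 < εm := by
      rw [hεdef, Finset.lt_inf'_iff]
      intro i hi
      rw [hPdef, Finset.mem_filter] at hi
      exact hi.2
    have hεle : ∀ i ∈ P, εm ≤ x i := fun i hi => Finset.inf'_le _ hi
    set δ : ℝ := l'' - ((s:ℝ))/(r:ℝ) with hδdef
    have hδ0 : 0 < δ := by rw [hδdef, hsrR]; linarith
    obtain ⟨T, hT⟩ := exists_nat_ge (1 / ((r:ℝ) * δ * εm))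
    rw [Filter.eventually_atTop]
    refine ⟨max T 1, fun t ht => ?_⟩
    have ht1 : 1 ≤ t := le_trans (le_max_right T 1) ht
    have htT : T ≤ t := le_trans (le_max_left T 1) ht
    have hstpos : 0 < s * t := Nat.mul_pos (by omega) (by omega)
    have hrtpos : 0 < r * t := Nat.mul_pos (by omega) (by omega)
    have hstR : (0:ℝ) < ((s*t:ℕ):ℝ) := by exact_mod_cast hstpos
    have hrtR : (0:ℝ) < ((r*t:ℕ):ℝ) := by exact_mod_cast hrtpos
    set a : Fin n →₀ ℕ :=
      Finsupp.equivFunOnFinite.symm (fun i => ⌈((s*t:ℕ):ℝ) * x i⌉₊) with hadef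
    have ha : ∀ i, a i = ⌈((s*t:ℕ):ℝ) * x i⌉₊ := by
      intro i
      rw [hadef]
      exact congrFun (Finsupp.equivFunOnFinite.apply_symm_apply
        (fun i => ⌈((s*t:ℕ):ℝ) * x i⌉₊)) i
    rw [Set.not_subset]
    refine ⟨monomial a (1:𝕜), ?_, ?_⟩
    · rw [SetLike.mem_coe, SqfAux.monomial_mem_symbolicPower_iff hS]
      intro p hp
      have h2 := hx1 p hp
      have h3 : ((s*t:ℕ):ℝ) ≤
          ∑ i ∈ Finset.univ.filter (fun i => (X i : MvPolynomial (Fin n) 𝕜) ∈ p),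
            (a i : ℝ) := by
        calc ((s*t:ℕ):ℝ) = ((s*t:ℕ):ℝ) * 1 := by ring
          _ ≤ ((s*t:ℕ):ℝ) * ∑ i : Fin n,
                (if (X i : MvPolynomial (Fin n) 𝕜) ∈ p then x i else 0) :=
              mul_le_mul_of_nonneg_left h2 (le_of_lt hstR)
          _ = ∑ i : Fin n, (if (X i : MvPolynomial (Fin n) 𝕜) ∈ p
                then ((s*t:ℕ):ℝ) * x i else 0) := by
              rw [Finset.mul_sum]
              refine Finset.sum_congr rfl fun i _ => ?_
              by_cases h : (X i : MvPolynomial (Fin n) 𝕜) ∈ p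
              · simp [h]
              · simp [h]
          _ = ∑ i ∈ Finset.univ.filter (fun i => (X i : MvPolynomial (Fin n) 𝕜) ∈ p),
                ((s*t:ℕ):ℝ) * x i := by
              rw [Finset.sum_filter]
          _ ≤ ∑ i ∈ Finset.univ.filter (fun i => (X i : MvPolynomial (Fin n) 𝕜) ∈ p),
                (a i : ℝ) := by
              refine Finset.sum_le_sum fun i _ => ?_
              rw [ha i]
              exact Nat.le_ceil _
      have h4 : ((s*t:ℕ):ℝ) ≤
          ((∑ i ∈ Finset.univ.filter (fun i => (X i : MvPolynomial (Fin n) 𝕜) ∈ p),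
            a i : ℕ):ℝ) := by
        rw [Nat.cast_sum]
        exact h3
      exact_mod_cast h4
    · intro hcl
      have hz := SqfAux.mem_NP_of_monomial_mem_integralClosure hS hrtpos hcl
      apply hl''NP
      have hfe2 : (fun i => l'' * x i)
          = (fun i => (a i : ℝ)/((r*t:ℕ):ℝ))
            + (fun i => l'' * x i - (a i : ℝ)/((r*t:ℕ):ℝ)) := by
        funext i
        show l'' * x i = (a i : ℝ)/((r*t:ℕ):ℝ) + (l'' * x i - (a i : ℝ)/((r*t:ℕ):ℝ))
        ring
      rw [hfe2]
      refine SqfAux.newtonPolyhedron_add_mem hz ?_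
      intro i
      show 0 ≤ l'' * x i - (a i : ℝ)/((r*t:ℕ):ℝ)
      by_cases hxi : 0 < x i
      · have hiP : i ∈ P := by rw [hPdef]; simp [hxi]
        have hceil : (a i : ℝ) < ((s*t:ℕ):ℝ) * x i + 1 := by
          rw [ha i]
          exact Nat.ceil_lt_add_one (by positivity)
        have hTt : (T:ℝ) ≤ (t:ℝ) := by exact_mod_cast htT
        have hpos : (0:ℝ) < (r:ℝ) * δ * εm := by positivity
        rw [div_le_iff₀ hpos] at hT
        have hεx : εm ≤ x i := hεle i hiP
        have ht0R : (0:ℝ) < (t:ℝ) := by exact_mod_cast (by omega : 0 < t)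
        have hrt_ge : 1 ≤ (r:ℝ) * (t:ℝ) * δ * (x i) := by
          have h6 : (T:ℝ) * ((r:ℝ) * δ * εm) ≤ (t:ℝ) * ((r:ℝ) * δ * εm) :=
            mul_le_mul_of_nonneg_right hTt (le_of_lt hpos)
          have h7 : (r:ℝ) * (t:ℝ) * δ * εm ≤ (r:ℝ) * (t:ℝ) * δ * (x i) :=
            mul_le_mul_of_nonneg_left hεx
              (mul_nonneg (mul_nonneg (le_of_lt hrR) (le_of_lt ht0R)) (le_of_lt hδ0))
          nlinarith [hT, h6, h7]
        have hcast : ((s*t:ℕ):ℝ) = (s:ℝ)*(t:ℝ) := by push_cast; ring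
        have hcast2 : ((r*t:ℕ):ℝ) = (r:ℝ)*(t:ℝ) := by push_cast; ring
        have hkey : (a i : ℝ)/((r*t:ℕ):ℝ) ≤ l'' * x i := by
          rw [div_le_iff₀ hrtR]
          have hδeq : l'' = (s:ℝ)/(r:ℝ) + δ := by rw [hδdef]; ring
          have h5 : ((s*t:ℕ):ℝ) * x i + 1 ≤ l'' * x i * ((r*t:ℕ):ℝ) := by
            rw [hcast, hcast2, hδeq]
            have hexp : ((s:ℝ)/(r:ℝ) + δ) * x i * ((r:ℝ)*(t:ℝ))
                = (s:ℝ)*(t:ℝ)*(x i) + (r:ℝ)*(t:ℝ)*δ*(x i) := by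
              field_simp
            rw [hexp]
            linarith [hrt_ge]
          linarith [hceil]
        linarith [hkey]
      · have hxi0 : x i = 0 := le_antisymm (not_lt.mp hxi) (hx0 i)
        have hai : a i = 0 := by
          rw [ha i, hxi0]
          simp
        rw [hxi0, hai]
        simp

end
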